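/- Fix d ≥ 1 and s < −1/d. Then the s-concave maximum likelihood estimator does not exist: for any observed points X_1,…,X_n ∈ ℝ^d, sup_{p ∈ P_s} Π_{i=1}^n p(X_i) = +∞. In particular, for a ∈ ℝ^d and b > 0 the functions p_{a,b}(x) ≡ ‖x−a‖^{1/s} 1_{‖x−a‖ ≤ b} / c_b (with c_b = ∫_{‖x‖≤b} ‖x‖^{1/s} dx < ∞) are s-concave densities, and the log-likelihood ℓ(a,b) = Σ_{i=1}^n log p_{a,b}(X_i) tends to +∞ as b is large and a approaches any X_i. -/

import Mathlib

open MeasureTheory ProbabilityTheory Real Filter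

noncomputable section

/-- The generalized mean `M_s(a, b; θ)`. -/
def Ms (s a b θ : ℝ) : ℝ :=
  if s = 0 then a ^ (1 - θ) * b ^ θ
  else if s < 0 ∧ (a = 0 ∨ b = 0) then 0
  else ((1 - θ) * a ^ s + θ * b ^ s) ^ (1 / s)

/-- `p` is an `s`-concave probability density on `ℝ^d`. -/
def IsSConcaveDensity (d : ℕ) (s : ℝ) (p : (Fin d → ℝ) → ℝ) : Prop :=
  (∀ x, 0 ≤ p x) ∧ Measurable p ∧ (∫ x, p x) = 1 ∧
    ∀ x₀ x₁ : Fin d → ℝ, ∀ θ ∈ Set.Ioo (0 : ℝ) 1,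
      Ms s (p x₀) (p x₁) θ ≤ p ((1 - θ) • x₀ + θ • x₁)

section AuxStmt11

open Metric

-- algebra: (u^m)^(1/s) * ((u:ℝ)^m)^d = (u ^ (1/s + d))^m for u > 0
lemma pow_rpow_alg {u : ℝ} (hu : 0 < u) (s : ℝ) (d m : ℕ) :
    (u ^ m) ^ ((1:ℝ)/s) * (u ^ m) ^ d = (u ^ ((1:ℝ)/s + d)) ^ m := by
  have h1 : ((u:ℝ) ^ m) ^ ((1:ℝ)/s) = u ^ ((m:ℝ) * (1/s)) := by
    rw [← Real.rpow_natCast u m, ← Real.rpow_mul hu.le]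
  have h2 : ((u:ℝ) ^ m) ^ d = u ^ ((m:ℝ) * d) := by
    rw [← Real.rpow_natCast (u ^ m) d, ← Real.rpow_natCast u m, ← Real.rpow_mul hu.le]
  have h3 : (u ^ ((1:ℝ)/s + d)) ^ m = u ^ (((1:ℝ)/s + d) * m) := by
    rw [← Real.rpow_natCast (u ^ ((1:ℝ)/s + d)) m, ← Real.rpow_mul hu.le]
  rw [h1, h2, h3, ← Real.rpow_add hu]
  ring_nf

variable {d : ℕ}

lemma cont_f {a : Fin d → ℝ} {ε s : ℝ} (hε : 0 < ε) :
    Continuous (fun x : Fin d → ℝ => (max ‖x - a‖ ε) ^ ((1:ℝ)/s)) := by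
  apply Continuous.rpow_const
  · exact (continuous_id.sub continuous_const).norm.max continuous_const
  · intro x; left; positivity

lemma int_f {a : Fin d → ℝ} {b ε s : ℝ} (hε : 0 < ε) :
    IntegrableOn (fun x : Fin d → ℝ => (max ‖x - a‖ ε) ^ ((1:ℝ)/s))
      (closedBall a b) := by
  exact (cont_f hε).continuousOn.integrableOn_compact (isCompact_closedBall a b)

lemma aux_step (s : ℝ) (hs : s < 0) (a : Fin d → ℝ) {b ε : ℝ} (hb : 0 < b) (hε : 0 < ε) :
    (∫ x in closedBall a b, (max ‖x - a‖ (ε/2)) ^ ((1:ℝ)/s))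
      ≤ (∫ x in closedBall a b, (max ‖x - a‖ ε) ^ ((1:ℝ)/s))
        + (ε/2) ^ ((1:ℝ)/s) * (2*ε) ^ d := by
  have hε2 : 0 < ε / 2 := by linarith
  have hinv : (1:ℝ)/s ≤ 0 := by
    apply div_nonpos_of_nonneg_of_nonpos <;> linarith
  have key : ∀ x ∈ closedBall a b,
      (max ‖x - a‖ (ε/2)) ^ ((1:ℝ)/s)
        ≤ (max ‖x - a‖ ε) ^ ((1:ℝ)/s)
          + (closedBall a ε).indicator (fun _ => (ε/2) ^ ((1:ℝ)/s)) x := by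
    intro x _
    by_cases hx : x ∈ closedBall a ε
    · rw [Set.indicator_of_mem hx]
      have h1 : (max ‖x - a‖ (ε/2)) ^ ((1:ℝ)/s) ≤ (ε/2) ^ ((1:ℝ)/s) :=
        Real.rpow_le_rpow_of_nonpos hε2 (le_max_right _ _) hinv
      have h2 : (0:ℝ) ≤ (max ‖x - a‖ ε) ^ ((1:ℝ)/s) := by positivity
      linarith
    · have hr : ε < ‖x - a‖ := by
        rw [mem_closedBall, dist_eq_norm] at hx; linarith [not_le.mp hx]
      rw [Set.indicator_of_notMem hx, add_zero]
      have : max ‖x - a‖ (ε/2) = max ‖x - a‖ ε := by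
        rw [max_eq_left (by linarith), max_eq_left (by linarith)]
      rw [this]
  have hind : IntegrableOn ((closedBall a ε).indicator
      (fun _ : Fin d → ℝ => (ε/2) ^ ((1:ℝ)/s))) (closedBall a b) := by
    apply Integrable.indicator _ measurableSet_closedBall
    exact integrableOn_const measure_closedBall_lt_top.ne
  calc (∫ x in closedBall a b, (max ‖x - a‖ (ε/2)) ^ ((1:ℝ)/s))
      ≤ ∫ x in closedBall a b, ((max ‖x - a‖ ε) ^ ((1:ℝ)/s)
          + (closedBall a ε).indicator (fun _ => (ε/2) ^ ((1:ℝ)/s)) x) := by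
        apply setIntegral_mono_on (int_f hε2) ((int_f hε).add hind)
          measurableSet_closedBall key
    _ = (∫ x in closedBall a b, (max ‖x - a‖ ε) ^ ((1:ℝ)/s))
          + ∫ x in closedBall a b,
              (closedBall a ε).indicator (fun _ => (ε/2) ^ ((1:ℝ)/s)) x :=
        integral_add (int_f hε) hind
    _ ≤ (∫ x in closedBall a b, (max ‖x - a‖ ε) ^ ((1:ℝ)/s))
          + (ε/2) ^ ((1:ℝ)/s) * (2*ε) ^ d := by
        gcongr
        rw [setIntegral_indicator measurableSet_closedBall, setIntegral_const, smul_eq_mul]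
        have hvol : (volume (closedBall a b ∩ closedBall a ε)).toReal ≤ (2*ε) ^ d := by
          have h1 : volume (closedBall a b ∩ closedBall a ε) ≤ volume (closedBall a ε) :=
            measure_mono Set.inter_subset_right
          have h2 : volume (closedBall a ε) = ENNReal.ofReal ((2*ε) ^ d) := by
            rw [Real.volume_pi_closedBall a hε.le, Fintype.card_fin]
          calc (volume (closedBall a b ∩ closedBall a ε)).toReal
              ≤ (volume (closedBall a ε)).toReal := by
                apply ENNReal.toReal_mono _ h1
                rw [h2]; exact ENNReal.ofReal_ne_top
            _ = (2*ε) ^ d := by rw [h2, ENNReal.toReal_ofReal (by positivity)]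
        rw [mul_comm]
        gcongr
        exact hvol

lemma aux_bound (s : ℝ) (hs : s < 0) (hds : 0 < (1:ℝ)/s + d)
    (a : Fin d → ℝ) {b : ℝ} (hb : 0 < b) :
    ∃ B : ℝ, ∀ m : ℕ,
      (∫ x in closedBall a b, (max ‖x - a‖ (b * (2:ℝ)⁻¹ ^ m)) ^ ((1:ℝ)/s)) ≤ B := by
  set u : ℝ := (2:ℝ)⁻¹ with hu
  have hu0 : (0:ℝ) < u := by norm_num [hu]
  have hu1 : u < 1 := by norm_num [hu]
  set q : ℝ := u ^ ((1:ℝ)/s + d) with hqdef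
  have hq0 : 0 ≤ q := Real.rpow_nonneg hu0.le _
  have hq1 : q < 1 := Real.rpow_lt_one hu0.le hu1 hds
  set C : ℝ := (b*u) ^ ((1:ℝ)/s) * (2*b) ^ d with hC
  have hC0 : 0 ≤ C := by positivity
  set J : ℕ → ℝ :=
    fun m => ∫ x in closedBall a b, (max ‖x - a‖ (b * u ^ m)) ^ ((1:ℝ)/s) with hJ
  have hεpos : ∀ m : ℕ, 0 < b * u ^ m := fun m => by positivity
  have step : ∀ m : ℕ, J (m+1) ≤ J m + C * q ^ m := by
    intro m
    have h2 : b * u ^ (m+1) = (b * u ^ m) / 2 := by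
      rw [pow_succ, hu]; ring
    have hcm : (b * u ^ (m+1)) ^ ((1:ℝ)/s) * (2*(b * u ^ m)) ^ d = C * q ^ m := by
      have e1 : b * u ^ (m+1) = (b*u) * u ^ m := by rw [pow_succ]; ring
      have e2 : 2*(b * u ^ m) = (2*b) * u ^ m := by ring
      rw [e1, e2, Real.mul_rpow (by positivity) (by positivity), mul_pow, hC, hqdef,
        ← pow_rpow_alg hu0 s d m]
      ring
    calc J (m+1) ≤ J m + (b * u ^ (m+1)) ^ ((1:ℝ)/s) * (2*(b * u ^ m)) ^ d := by
          have := aux_step (d := d) s hs a hb (hεpos m)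
          rw [← h2] at this
          exact this
      _ = J m + C * q ^ m := by rw [hcm]
  have hsum : ∀ m : ℕ, ∑ k ∈ Finset.range m, q ^ k ≤ (1-q)⁻¹ := by
    intro m
    rw [geom_sum_eq (by linarith : q ≠ 1)]
    rw [div_le_iff_of_neg (by linarith : q - 1 < 0)]
    have he : (1-q)⁻¹ * (q-1) = -1 := by
      rw [inv_mul_eq_div, div_eq_iff (by linarith : (1:ℝ)-q ≠ 0)]; ring
    rw [he]
    linarith [pow_nonneg hq0 m]
  refine ⟨J 0 + C * (1-q)⁻¹, fun m => ?_⟩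
  have hind : ∀ m : ℕ, J m ≤ J 0 + C * ∑ k ∈ Finset.range m, q ^ k := by
    intro m
    induction m with
    | zero => simp
    | succ m ih =>
      calc J (m+1) ≤ J m + C * q ^ m := step m
        _ ≤ J 0 + C * (∑ k ∈ Finset.range m, q ^ k) + C * q ^ m := by linarith
        _ = J 0 + C * ∑ k ∈ Finset.range (m+1), q ^ k := by
            rw [Finset.sum_range_succ]; ring
  calc J m ≤ J 0 + C * ∑ k ∈ Finset.range m, q ^ k := hind m
    _ ≤ J 0 + C * (1-q)⁻¹ := by
        have := hsum m
        nlinarith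

lemma pow_rpow_comm {u : ℝ} (hu : 0 ≤ u) (y : ℝ) (m : ℕ) :
    (u ^ m) ^ y = (u ^ y) ^ m := by
  rw [← Real.rpow_natCast u m, ← Real.rpow_mul hu, mul_comm, Real.rpow_mul hu,
    Real.rpow_natCast]

end AuxStmt11

set_option maxHeartbeats 1000000
open Metric

/-- for `s < -1/d` the `s`-concave maximum likelihood estimator does not exist:
for any observed points `X_1, …, X_n`, the likelihood is unbounded over the class of
`s`-concave densities, i.e. `sup_{p ∈ P_s} ∏_i p(X_i) = +∞`. -/
theorem stmt11 (d : ℕ) (hd : 1 ≤ d) (s : ℝ) (hs : s < -1 / (d : ℝ))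
    (n : ℕ) (hn : 0 < n) (X : Fin n → Fin d → ℝ) :
    ∀ M : ℝ, ∃ p : (Fin d → ℝ) → ℝ, IsSConcaveDensity d s p ∧ M < ∏ i, p (X i) := by
  intro M
  have hd0 : (0:ℝ) < d := by exact_mod_cast hd
  have hs0 : s < 0 := lt_trans hs (div_neg_of_neg_of_pos (by norm_num) hd0)
  have hsne : s ≠ 0 := ne_of_lt hs0
  have hinv_neg : (1:ℝ)/s < 0 := div_neg_of_pos_of_neg one_pos hs0
  have hds : 0 < (1:ℝ)/s + d := by
    have h1 : s * d < -1 := by rwa [lt_div_iff₀ hd0] at hs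
    have h2 : (1:ℝ)/s + d = (1 + d*s)/s := by field_simp
    rw [h2]
    apply div_pos_of_neg_of_neg (by nlinarith) hs0
  set i₀ : Fin n := ⟨0, hn⟩ with hi₀
  set a : Fin d → ℝ := X i₀ with ha
  set b : ℝ := 1 + ∑ i, ‖X i - a‖ with hbdef
  have hb : 0 < b := by positivity
  have hXb : ∀ i, ‖X i - a‖ ≤ b := by
    intro i
    have h1 : ‖X i - a‖ ≤ ∑ j, ‖X j - a‖ :=
      Finset.single_le_sum (f := fun j => ‖X j - a‖) (fun j _ => norm_nonneg _)
        (Finset.mem_univ i)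
    linarith
  obtain ⟨B, hB⟩ := aux_bound s hs0 hds a hb
  set u : ℝ := (2:ℝ)⁻¹ with hu
  have hu0 : (0:ℝ) < u := by norm_num [hu]
  have hu1 : u < 1 := by norm_num [hu]
  have ht1 : 1 < u ^ ((1:ℝ)/s) :=
    (Real.one_lt_rpow_iff_of_pos hu0).mpr (Or.inr ⟨hu1, hinv_neg⟩)
  -- lower bound L for all the integrals I m
  set L : ℝ := b ^ ((1:ℝ)/s) * (2*b) ^ d with hL
  have hL0 : 0 < L := by positivity
  have hIlow : ∀ m : ℕ,
      L ≤ ∫ x in closedBall a b, (max ‖x - a‖ (b * u ^ m)) ^ ((1:ℝ)/s) := by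
    intro m
    have hεpos : 0 < b * u ^ m := by positivity
    have hεle : b * u ^ m ≤ b := by
      nlinarith [pow_le_one₀ hu0.le hu1.le (n := m), pow_pos hu0 m]
    have hmono : ∀ x ∈ closedBall a b,
        b ^ ((1:ℝ)/s) ≤ (max ‖x - a‖ (b * u ^ m)) ^ ((1:ℝ)/s) := by
      intro x hx
      have h1 : max ‖x - a‖ (b * u ^ m) ≤ b := by
        apply max_le _ hεle
        rw [mem_closedBall, dist_eq_norm] at hx; exact hx
      have h2 : 0 < max ‖x - a‖ (b * u ^ m) := lt_max_of_lt_right hεpos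
      exact Real.rpow_le_rpow_of_nonpos h2 h1 hinv_neg.le
    calc L = b ^ ((1:ℝ)/s) * (volume (closedBall a b)).toReal := by
          rw [hL, Real.volume_pi_closedBall a hb.le, Fintype.card_fin,
            ENNReal.toReal_ofReal (by positivity)]
      _ = ∫ _x in closedBall a b, b ^ ((1:ℝ)/s) := by
          rw [setIntegral_const, smul_eq_mul, mul_comm]; rfl
      _ ≤ _ := by
          apply setIntegral_mono_on _ (int_f (by positivity)) measurableSet_closedBall hmono
          exact integrableOn_const measure_closedBall_lt_top.ne
  have hB0 : 0 < B := lt_of_lt_of_le (lt_of_lt_of_le hL0 (hIlow 0)) (hB 0)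
  set c₀ : ℝ := B⁻¹ * b ^ ((1:ℝ)/s) with hc₀
  have hc₀0 : 0 < c₀ := by positivity
  -- choose m
  set T : ℝ := (|M|+1) * B / c₀ ^ (n-1) with hT
  obtain ⟨m, hm⟩ := pow_unbounded_of_one_lt (T / b ^ ((1:ℝ)/s)) ht1
  set ε : ℝ := b * u ^ m with hε
  have hεpos : 0 < ε := by positivity
  have hεle : ε ≤ b := by
    rw [hε]; nlinarith [pow_le_one₀ hu0.le hu1.le (n := m), pow_pos hu0 m]
  have hεrp : ε ^ ((1:ℝ)/s) = b ^ ((1:ℝ)/s) * (u ^ ((1:ℝ)/s)) ^ m := by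
    rw [hε, Real.mul_rpow hb.le (by positivity), pow_rpow_comm hu0.le]
  have hεT : T < ε ^ ((1:ℝ)/s) := by
    rw [hεrp]
    have hbp : 0 < b ^ ((1:ℝ)/s) := Real.rpow_pos_of_pos hb _
    calc T = b ^ ((1:ℝ)/s) * (T / b ^ ((1:ℝ)/s)) := by field_simp
      _ < b ^ ((1:ℝ)/s) * (u ^ ((1:ℝ)/s)) ^ m := by
          exact mul_lt_mul_of_pos_left hm hbp
  -- the density
  set f : (Fin d → ℝ) → ℝ := fun x => (max ‖x - a‖ ε) ^ ((1:ℝ)/s) with hf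
  set I : ℝ := ∫ x in closedBall a b, f x with hI
  have hIL : L ≤ I := hIlow m
  have hIB : I ≤ B := hB m
  have hIpos : 0 < I := lt_of_lt_of_le hL0 hIL
  set p : (Fin d → ℝ) → ℝ := fun x => I⁻¹ * (closedBall a b).indicator f x with hp
  have hf0 : ∀ x, 0 ≤ f x := fun x => Real.rpow_nonneg (le_max_of_le_right hεpos.le) _
  have hfpos : ∀ x, 0 < f x := fun x =>
    Real.rpow_pos_of_pos (lt_max_of_lt_right hεpos) _
  have hnn : ∀ x, 0 ≤ p x := by
    intro x
    apply mul_nonneg (by positivity)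
    exact Set.indicator_nonneg (fun y _ => hf0 y) x
  have hmeas : Measurable p := by
    apply Measurable.const_mul
    exact ((cont_f hεpos).measurable).indicator measurableSet_closedBall
  have hint : (∫ x, p x) = 1 := by
    rw [hp]
    rw [integral_const_mul, integral_indicator measurableSet_closedBall, ← hI,
      inv_mul_cancel₀ hIpos.ne']
  have hconc : ∀ x₀ x₁ : Fin d → ℝ, ∀ θ ∈ Set.Ioo (0 : ℝ) 1,
      Ms s (p x₀) (p x₁) θ ≤ p ((1 - θ) • x₀ + θ • x₁) := by
    intro x₀ x₁ θ hθ
    obtain ⟨hθ0, hθ1⟩ := hθ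
    rw [Ms, if_neg hsne]
    by_cases h0 : p x₀ = 0 ∨ p x₁ = 0
    · rw [if_pos ⟨hs0, h0⟩]; exact hnn _
    · rw [if_neg (by tauto)]
      push_neg at h0
      have hx₀K : x₀ ∈ closedBall a b := by
        by_contra h
        exact h0.1 (by simp [hp, Set.indicator_of_notMem h])
      have hx₁K : x₁ ∈ closedBall a b := by
        by_contra h
        exact h0.2 (by simp [hp, Set.indicator_of_notMem h])
      have hmidK : (1 - θ) • x₀ + θ • x₁ ∈ closedBall a b :=
        (convex_closedBall a b) hx₀K hx₁K (by linarith) hθ0.le (by ring)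
      set M₀ : ℝ := max ‖x₀ - a‖ ε with hM₀
      set M₁ : ℝ := max ‖x₁ - a‖ ε with hM₁
      set Mm : ℝ := max ‖(1 - θ) • x₀ + θ • x₁ - a‖ ε with hMm
      have hM₀0 : 0 < M₀ := lt_max_of_lt_right hεpos
      have hM₁0 : 0 < M₁ := lt_max_of_lt_right hεpos
      have hMm0 : 0 < Mm := lt_max_of_lt_right hεpos
      have hp₀ : p x₀ = I⁻¹ * M₀ ^ ((1:ℝ)/s) := by
        simp [hp, Set.indicator_of_mem hx₀K, hf, hM₀]
      have hp₁ : p x₁ = I⁻¹ * M₁ ^ ((1:ℝ)/s) := by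
        simp [hp, Set.indicator_of_mem hx₁K, hf, hM₁]
      have hpm : p ((1 - θ) • x₀ + θ • x₁) = I⁻¹ * Mm ^ ((1:ℝ)/s) := by
        simp [hp, Set.indicator_of_mem hmidK, hf, hMm]
      have hIinv : (0:ℝ) < I⁻¹ := by positivity
      have hpow : ∀ {r : ℝ}, 0 < r → (I⁻¹ * r ^ ((1:ℝ)/s)) ^ s = (I⁻¹) ^ s * r := by
        intro r hr
        rw [Real.mul_rpow hIinv.le (Real.rpow_nonneg hr.le _),
          ← Real.rpow_mul hr.le, one_div_mul_cancel hsne, Real.rpow_one]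
      rw [hp₀, hp₁, hpm, hpow hM₀0, hpow hM₁0]
      set W : ℝ := (1 - θ) * M₀ + θ * M₁ with hW
      have hW0 : 0 < W := by
        have h1 := mul_pos (show (0:ℝ) < 1 - θ by linarith) hM₀0
        have h2 := mul_pos hθ0 hM₁0
        rw [hW]; linarith
      have keyW : Mm ≤ W := by
        rw [hMm]
        apply max_le
        · have hm : (1 - θ) • x₀ + θ • x₁ - a = (1 - θ) • (x₀ - a) + θ • (x₁ - a) := by
            module
          calc ‖(1 - θ) • x₀ + θ • x₁ - a‖
              ≤ ‖(1 - θ) • (x₀ - a)‖ + ‖θ • (x₁ - a)‖ := by rw [hm]; exact norm_add_le _ _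
            _ = (1 - θ) * ‖x₀ - a‖ + θ * ‖x₁ - a‖ := by
                rw [norm_smul, norm_smul, Real.norm_of_nonneg (by linarith),
                  Real.norm_of_nonneg hθ0.le]
            _ ≤ W := by
                rw [hW]
                have h1 : ‖x₀ - a‖ ≤ M₀ := le_max_left _ _
                have h2 : ‖x₁ - a‖ ≤ M₁ := le_max_left _ _
                nlinarith
        · have h1 : ε ≤ M₀ := le_max_right _ _
          have h2 : ε ≤ M₁ := le_max_right _ _
          nlinarith
      have e1 : (1 - θ) * ((I⁻¹) ^ s * M₀) + θ * ((I⁻¹) ^ s * M₁) = (I⁻¹) ^ s * W := by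
        rw [hW]; ring
      rw [e1, Real.mul_rpow (Real.rpow_nonneg hIinv.le _) hW0.le,
        ← Real.rpow_mul hIinv.le, mul_one_div_cancel hsne, Real.rpow_one]
      have : W ^ ((1:ℝ)/s) ≤ Mm ^ ((1:ℝ)/s) :=
        Real.rpow_le_rpow_of_nonpos hMm0 keyW hinv_neg.le
      exact mul_le_mul_of_nonneg_left this hIinv.le
  refine ⟨p, ⟨hnn, hmeas, hint, hconc⟩, ?_⟩
  -- product bound
  have hXK : ∀ i, X i ∈ closedBall a b := by
    intro i; rw [mem_closedBall, dist_eq_norm]; exact hXb i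
  have hple : ∀ i, c₀ ≤ p (X i) := by
    intro i
    have h1 : p (X i) = I⁻¹ * (max ‖X i - a‖ ε) ^ ((1:ℝ)/s) := by
      simp [hp, Set.indicator_of_mem (hXK i), hf]
    have h2 : b ^ ((1:ℝ)/s) ≤ (max ‖X i - a‖ ε) ^ ((1:ℝ)/s) := by
      apply Real.rpow_le_rpow_of_nonpos (lt_max_of_lt_right hεpos)
        (max_le (hXb i) hεle) hinv_neg.le
    have h3 : B⁻¹ ≤ I⁻¹ := by
      apply inv_anti₀ hIpos hIB
    rw [h1, hc₀]
    apply mul_le_mul h3 h2 (by positivity) (by positivity)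
  have hpi₀ : B⁻¹ * ε ^ ((1:ℝ)/s) ≤ p (X i₀) := by
    have h1 : p (X i₀) = I⁻¹ * ε ^ ((1:ℝ)/s) := by
      have : ‖X i₀ - a‖ = 0 := by rw [ha]; simp
      simp [hp, Set.indicator_of_mem (hXK i₀), hf, this, max_eq_right hεpos.le]
    have h3 : B⁻¹ ≤ I⁻¹ := inv_anti₀ hIpos hIB
    rw [h1]
    apply mul_le_mul_of_nonneg_right h3 (by positivity)
  have hcard : (Finset.univ.erase i₀).card = n - 1 := by
    rw [Finset.card_erase_of_mem (Finset.mem_univ i₀), Finset.card_univ, Fintype.card_fin]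
  have hprod : B⁻¹ * ε ^ ((1:ℝ)/s) * c₀ ^ (n-1) ≤ ∏ i, p (X i) := by
    rw [← Finset.mul_prod_erase Finset.univ (fun i => p (X i)) (Finset.mem_univ i₀)]
    have h2 : c₀ ^ (n-1) ≤ ∏ i ∈ Finset.univ.erase i₀, p (X i) := by
      rw [← hcard, ← Finset.prod_const]
      exact Finset.prod_le_prod (fun i _ => hc₀0.le) (fun i _ => hple i)
    apply mul_le_mul (hpi₀) h2 (by positivity) (le_trans (by positivity) (hpi₀))
  have hfinal : M < B⁻¹ * ε ^ ((1:ℝ)/s) * c₀ ^ (n-1) := by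
    have h1 : (|M|+1) * B / c₀ ^ (n-1) < ε ^ ((1:ℝ)/s) := hεT
    have hc : (0:ℝ) < c₀ ^ (n-1) := pow_pos hc₀0 _
    have h2 : (|M|+1) * B < ε ^ ((1:ℝ)/s) * c₀ ^ (n-1) := by
      rw [div_lt_iff₀ hc] at h1; linarith
    have h3 : |M| + 1 < B⁻¹ * (ε ^ ((1:ℝ)/s) * c₀ ^ (n-1)) := by
      rw [lt_inv_mul_iff₀ hB0]; linarith
    have h4 : M ≤ |M| := le_abs_self M
    nlinarith
  linarith [hprod, hfinal]
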